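/- Let c > 0 and η, τ ∈ ℝ with η² − τ² ≠ −4c², let ν ∈ ℝ³ be a unit vector, and let R_{η,τ} := −( i c (α·ν) + (1/2)(η I₄ + τ β) )⁻¹ · ( −i c (α·ν) + (1/2)(η I₄ + τ β) ). Then R_{η,τ} is an invertible matrix and R_{η,τ}⁻¹ = R_{−η,−τ}. -/

import Mathlib

open Matrix

noncomputable section

/-- The Pauli matrices. -/
def pauli : Fin 3 → Matrix (Fin 2) (Fin 2) ℂ
  | 0 => !![0, 1; 1, 0]
  | 1 => !![0, -Complex.I; Complex.I, 0]
  | 2 => !![1, 0; 0, -1]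

/-- The Dirac matrices α₁, α₂, α₃. -/
def diracAlpha (j : Fin 3) : Matrix (Fin 4) (Fin 4) ℂ :=
  Matrix.reindex finSumFinEquiv finSumFinEquiv (Matrix.fromBlocks 0 (pauli j) (pauli j) 0)

/-- The Dirac matrix β. -/
def diracBeta : Matrix (Fin 4) (Fin 4) ℂ :=
  Matrix.reindex finSumFinEquiv finSumFinEquiv ((Matrix.fromBlocks 1 0 0 (-1) : Matrix (Fin 2 ⊕ Fin 2) (Fin 2 ⊕ Fin 2) ℂ))

/-- The matrix γ₅. -/
def gammaFive : Matrix (Fin 4) (Fin 4) ℂ :=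
  Matrix.reindex finSumFinEquiv finSumFinEquiv ((Matrix.fromBlocks 0 1 1 0 : Matrix (Fin 2 ⊕ Fin 2) (Fin 2 ⊕ Fin 2) ℂ))

/-- α·x for x ∈ ℝ³. -/
def alphaDot (x : EuclideanSpace ℝ (Fin 3)) : Matrix (Fin 4) (Fin 4) ℂ :=
  ∑ j : Fin 3, (x j : ℂ) • diracAlpha j

/-- The (η,τ)-jump condition. -/
def JumpCond (c η τ : ℝ) (ν : EuclideanSpace ℝ (Fin 3)) (u v : Fin 4 → ℂ) : Prop :=
  (Complex.I * (c : ℂ)) • ((alphaDot ν) *ᵥ (u - v)) +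
    ((1 : ℂ) / 2) • ((((η : ℂ) • (1 : Matrix (Fin 4) (Fin 4) ℂ) + (τ : ℂ) • diracBeta)) *ᵥ (u + v)) = 0

/-- The matrix R_{η,τ} relating the two boundary traces. -/
def Rmat (c η τ : ℝ) (ν : EuclideanSpace ℝ (Fin 3)) : Matrix (Fin 4) (Fin 4) ℂ :=
  -((((Complex.I * (c : ℂ)) • alphaDot ν
      + ((1 : ℂ) / 2) • ((η : ℂ) • (1 : Matrix (Fin 4) (Fin 4) ℂ) + (τ : ℂ) • diracBeta))⁻¹)
    * ((-(Complex.I * (c : ℂ))) • alphaDot ν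
      + ((1 : ℂ) / 2) • ((η : ℂ) • (1 : Matrix (Fin 4) (Fin 4) ℂ) + (τ : ℂ) • diracBeta)))

/-! ### Auxiliary explicit computations -/

lemma dA0 : diracAlpha 0 = !![0,0,0,1; 0,0,1,0; 0,1,0,0; 1,0,0,0] := by
  ext i j; fin_cases i <;> fin_cases j <;> rfl

lemma dA1 : diracAlpha 1 = !![0,0,0,-Complex.I; 0,0,Complex.I,0; 0,-Complex.I,0,0; Complex.I,0,0,0] := by
  ext i j; fin_cases i <;> fin_cases j <;> rfl

lemma dA2 : diracAlpha 2 = !![0,0,1,0; 0,0,0,-1; 1,0,0,0; 0,-1,0,0] := by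
  ext i j; fin_cases i <;> fin_cases j <;> rfl

lemma dB : diracBeta = !![1,0,0,0; 0,1,0,0; 0,0,-1,0; 0,0,0,-1] := by
  ext i j; fin_cases i <;> fin_cases j <;>
    simp [diracBeta, Matrix.one_apply, vecHead, vecTail,
      show (finSumFinEquiv.symm (0:Fin 4) : Fin 2 ⊕ Fin 2) = Sum.inl 0 from rfl,
      show (finSumFinEquiv.symm (1:Fin 4) : Fin 2 ⊕ Fin 2) = Sum.inl 1 from rfl,
      show (finSumFinEquiv.symm (2:Fin 4) : Fin 2 ⊕ Fin 2) = Sum.inr 0 from rfl,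
      show (finSumFinEquiv.symm (3:Fin 4) : Fin 2 ⊕ Fin 2) = Sum.inr 1 from rfl]

lemma aD (x : EuclideanSpace ℝ (Fin 3)) : alphaDot x =
    !![0,0,(x 2 : ℂ), (x 0 : ℂ) - Complex.I*(x 1:ℂ);
       0,0,(x 0:ℂ) + Complex.I*(x 1:ℂ), -(x 2:ℂ);
       (x 2:ℂ), (x 0:ℂ) - Complex.I*(x 1:ℂ), 0, 0;
       (x 0:ℂ) + Complex.I*(x 1:ℂ), -(x 2:ℂ), 0, 0] := by
  rw [alphaDot, Fin.sum_univ_three, dA0, dA1, dA2]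
  ext i j; fin_cases i <;> fin_cases j <;> simp [vecHead, vecTail] <;> ring

lemma aa (ν : EuclideanSpace ℝ (Fin 3)) (hν : ‖ν‖ = 1) : alphaDot ν * alphaDot ν = 1 := by
  have hs : ((ν 0 : ℝ):ℂ)^2 + ((ν 1 : ℝ):ℂ)^2 + ((ν 2 : ℝ):ℂ)^2 = 1 := by
    have hr : (ν 0)^2 + (ν 1)^2 + (ν 2)^2 = 1 := by
      have := EuclideanSpace.norm_eq ν
      rw [hν] at this
      have h2 : Real.sqrt (∑ i, ‖ν i‖^2) = 1 := this.symm
      have h3 : (∑ i, ‖ν i‖^2) = 1 := by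
        have := Real.sqrt_eq_one.mp h2; simpa using this
      simpa [Fin.sum_univ_three, Real.norm_eq_abs, sq_abs] using h3
    have hr' := congrArg Complex.ofReal hr
    push_cast at hr'
    exact hr'
  rw [aD]
  ext i j
  fin_cases i <;> fin_cases j <;>
    simp [Matrix.mul_apply, Fin.sum_univ_four, Matrix.one_apply, vecHead, vecTail] <;>
    ring_nf <;> simp only [Complex.I_sq] <;> linear_combination hs

lemma bb : diracBeta * diracBeta = 1 := by
  rw [dB]; ext i j; fin_cases i <;> fin_cases j <;>
    simp [Matrix.mul_apply, Fin.sum_univ_four, Matrix.one_apply, vecHead, vecTail]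

lemma ab (ν : EuclideanSpace ℝ (Fin 3)) : alphaDot ν * diracBeta = -(diracBeta * alphaDot ν) := by
  rw [aD, dB]; ext i j; fin_cases i <;> fin_cases j <;>
    simp [Matrix.mul_apply, Fin.sum_univ_four, vecHead, vecTail] <;> ring

/-! ### Abstract algebra -/

lemma keymul1 {M : Type*} [Ring M] [Algebra ℂ M] (a b : M) (u e t : ℂ)
    (ha : a*a = 1) (hb : b*b = 1) (hab : a*b = -(b*a)) :
    (u • a + ((1:ℂ)/2) • (e • (1:M) + t • b)) * ((-u) • a + ((1:ℂ)/2) • (e • (1:M) - t • b))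
      = (-(u^2) + (e^2 - t^2)/4) • (1 : M) := by
  simp only [add_mul, mul_add, mul_sub, sub_mul, smul_mul_assoc, mul_smul_comm, smul_smul,
    smul_add, smul_sub, ha, hb, hab, mul_one, one_mul, smul_neg]
  module

lemma keymul2 {M : Type*} [Ring M] [Algebra ℂ M] (a b : M) (u e t : ℂ)
    (ha : a*a = 1) (hb : b*b = 1) (hab : a*b = -(b*a)) :
    ((-u) • a + ((1:ℂ)/2) • (e • (1:M) - t • b)) * (u • a + ((1:ℂ)/2) • (e • (1:M) + t • b))
      = (-(u^2) + (e^2 - t^2)/4) • (1 : M) := by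
  simp only [add_mul, mul_add, mul_sub, sub_mul, smul_mul_assoc, mul_smul_comm, smul_smul,
    smul_add, smul_sub, ha, hb, hab, mul_one, one_mul, smul_neg]
  module

/-- The factor `ic(α·ν) + (1/2)(ηI + τβ)`. -/
def Pfac (c η τ : ℝ) (ν : EuclideanSpace ℝ (Fin 3)) : Matrix (Fin 4) (Fin 4) ℂ :=
  (Complex.I * (c : ℂ)) • alphaDot ν
    + ((1 : ℂ) / 2) • ((η : ℂ) • (1 : Matrix (Fin 4) (Fin 4) ℂ) + (τ : ℂ) • diracBeta)

/-- The "conjugate" factor `-ic(α·ν) + (1/2)(ηI − τβ)`. -/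
def Sfac (c η τ : ℝ) (ν : EuclideanSpace ℝ (Fin 3)) : Matrix (Fin 4) (Fin 4) ℂ :=
  (-(Complex.I * (c : ℂ))) • alphaDot ν
    + ((1 : ℂ) / 2) • ((η : ℂ) • (1 : Matrix (Fin 4) (Fin 4) ℂ) - (τ : ℂ) • diracBeta)

lemma Rmat_eq_Pfac (c η τ : ℝ) (ν : EuclideanSpace ℝ (Fin 3)) :
    Rmat c η τ ν = (Pfac c η τ ν)⁻¹ * Pfac c (-η) (-τ) ν := by
  have key : ((-(Complex.I * (c : ℂ))) • alphaDot ν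
      + ((1 : ℂ) / 2) • ((η : ℂ) • (1 : Matrix (Fin 4) (Fin 4) ℂ) + (τ : ℂ) • diracBeta))
      = -(Pfac c (-η) (-τ) ν) := by
    unfold Pfac
    push_cast
    module
  rw [Rmat, key, mul_neg, neg_neg]; rfl

theorem Rmat_invertible_inv_eq (c η τ : ℝ) (hc : 0 < c)
    (h : η ^ 2 - τ ^ 2 ≠ -(4 * c ^ 2))
    (ν : EuclideanSpace ℝ (Fin 3)) (hν : ‖ν‖ = 1) :
    IsUnit (Rmat c η τ ν) ∧ (Rmat c η τ ν)⁻¹ = Rmat c (-η) (-τ) ν := by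
  have ha := aa ν hν
  have hb := bb
  have hab := ab ν
  set k : ℂ := -((Complex.I * (c:ℂ))^2) + (((η:ℂ))^2 - ((τ:ℂ))^2)/4 with hk_def
  have hk : k ≠ 0 := by
    intro hk0
    apply h
    have : ((η:ℂ))^2 - ((τ:ℂ))^2 = -(4*(c:ℂ)^2) := by
      have hI : (Complex.I * (c:ℂ))^2 = -(c:ℂ)^2 := by
        rw [mul_pow, Complex.I_sq]; ring
      rw [hk_def, hI] at hk0
      linear_combination 4 * hk0
    exact_mod_cast this
  -- the two-sided inverse facts for Pfac
  have hPS : ∀ e t : ℝ, (e:ℂ)^2 - (t:ℂ)^2 = ((η:ℂ))^2 - ((τ:ℂ))^2 →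
      Pfac c e t ν * Sfac c e t ν = k • 1 ∧ Sfac c e t ν * Pfac c e t ν = k • 1 := by
    intro e t het
    have h1 := keymul1 (alphaDot ν) diracBeta (Complex.I * (c:ℂ)) (e:ℂ) (t:ℂ) ha hb hab
    have h2 := keymul2 (alphaDot ν) diracBeta (Complex.I * (c:ℂ)) (e:ℂ) (t:ℂ) ha hb hab
    rw [het] at h1 h2
    exact ⟨h1, h2⟩
  have hmk : ∀ e t : ℝ, (e:ℂ)^2 - (t:ℂ)^2 = ((η:ℂ))^2 - ((τ:ℂ))^2 →
      Pfac c e t ν * (k⁻¹ • Sfac c e t ν) = 1 ∧ (k⁻¹ • Sfac c e t ν) * Pfac c e t ν = 1 := by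
    intro e t het
    obtain ⟨h1, h2⟩ := hPS e t het
    constructor
    · rw [mul_smul_comm, h1, smul_smul, inv_mul_cancel₀ hk, one_smul]
    · rw [smul_mul_assoc, h2, smul_smul, inv_mul_cancel₀ hk, one_smul]
  have hcη : ((η:ℂ))^2 - ((τ:ℂ))^2 = ((η:ℂ))^2 - ((τ:ℂ))^2 := rfl
  have hcη' : (((-η:ℝ)):ℂ)^2 - (((-τ:ℝ)):ℂ)^2 = ((η:ℂ))^2 - ((τ:ℂ))^2 := by
    push_cast; ring
  obtain ⟨hX1, hX2⟩ := hmk η τ hcη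
  obtain ⟨hY1, hY2⟩ := hmk (-η) (-τ) hcη'
  set X := Pfac c η τ ν
  set Y := Pfac c (-η) (-τ) ν
  set Xi := k⁻¹ • Sfac c η τ ν
  set Yi := k⁻¹ • Sfac c (-η) (-τ) ν
  have hXinv : X⁻¹ = Xi := Matrix.inv_eq_right_inv hX1
  have hYinv : Y⁻¹ = Yi := Matrix.inv_eq_right_inv hY1
  have hReq : Rmat c η τ ν = X⁻¹ * Y := Rmat_eq_Pfac c η τ ν
  have hReq' : Rmat c (-η) (-τ) ν = Y⁻¹ * X := by
    have := Rmat_eq_Pfac c (-η) (-τ) ν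
    rwa [neg_neg, neg_neg] at this
  have hone1 : Rmat c η τ ν * Rmat c (-η) (-τ) ν = 1 := by
    rw [hReq, hReq', hXinv, hYinv]
    calc Xi * Y * (Yi * X) = Xi * (Y * Yi) * X := by rw [mul_assoc, mul_assoc, mul_assoc]
    _ = Xi * X := by rw [hY1, mul_one]
    _ = 1 := hX2
  have hone2 : Rmat c (-η) (-τ) ν * Rmat c η τ ν = 1 := by
    rw [hReq, hReq', hXinv, hYinv]
    calc Yi * X * (Xi * Y) = Yi * (X * Xi) * Y := by rw [mul_assoc, mul_assoc, mul_assoc]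
    _ = Yi * Y := by rw [hX1, mul_one]
    _ = 1 := hY2
  refine ⟨⟨⟨Rmat c η τ ν, Rmat c (-η) (-τ) ν, hone1, hone2⟩, rfl⟩, ?_⟩
  exact Matrix.inv_eq_right_inv hone1

end
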